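/- Let ξ ∈ ℝ² with |ξ₁| < |ξ|²/4, t ≥ 0, λ± = (-|ξ|² ± √(|ξ|⁴ - 4ξ₁²))/2. Then the multiplier M̂₂(ξ,t) = (λ₊ e^{λ₋t} - λ₋ e^{λ₊t})/(λ₊ - λ₋) satisfies |M̂₂(ξ,t)| ≤ C e^{-ξ₁² t/|ξ|²}, and M̂₃(ξ,t) = (λ₋ e^{λ₋t} - λ₊ e^{λ₊t})/(λ₋ - λ₊) satisfies |M̂₃(ξ,t)| ≤ C (e^{-|ξ|²t/2} + (ξ₁²/|ξ|⁴) e^{-ξ₁²t/|ξ|²}). -/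
import Mathlib

lemma aux3 (ξ₁ s t : ℝ) (ht : 0 ≤ t) (hs : 0 < s) (hx : ξ₁ ^ 2 < s ^ 2 / 16) :
    (let lamp : ℝ := (-s + Real.sqrt (s ^ 2 - 4 * ξ₁ ^ 2)) / 2
     let lamm : ℝ := (-s - Real.sqrt (s ^ 2 - 4 * ξ₁ ^ 2)) / 2
     |(lamp * Real.exp (lamm * t) - lamm * Real.exp (lamp * t)) / (lamp - lamm)|
        ≤ 4 * Real.exp (-(ξ₁ ^ 2) * t / s) ∧
     |(lamm * Real.exp (lamm * t) - lamp * Real.exp (lamp * t)) / (lamm - lamp)|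
        ≤ 4 * (Real.exp (-(s * t) / 2) +
            (ξ₁ ^ 2 / s ^ 2) * Real.exp (-(ξ₁ ^ 2) * t / s))) := by
  intro lamp lamm
  set d : ℝ := Real.sqrt (s ^ 2 - 4 * ξ₁ ^ 2) with hdd
  have hdnn : 0 ≤ d := Real.sqrt_nonneg _
  have hd2 : d ^ 2 = s ^ 2 - 4 * ξ₁ ^ 2 := Real.sq_sqrt (by nlinarith)
  have hdles : d ≤ s := by nlinarith
  have hdge : s / 2 ≤ d := by nlinarith
  have hdpos : 0 < d := lt_of_lt_of_le (by linarith) hdge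
  have hsd : s * d ≤ s ^ 2 - 2 * ξ₁ ^ 2 := by
    nlinarith [sq_nonneg ξ₁, sq_nonneg (ξ₁ ^ 2), mul_nonneg hs.le hdnn]
  have hsd2 : s ^ 2 - 4 * ξ₁ ^ 2 ≤ s * d := by nlinarith
  have hlamp_le : lamp ≤ -ξ₁ ^ 2 / s := by
    show (-s + d) / 2 ≤ -ξ₁ ^ 2 / s
    rw [div_le_div_iff₀ (by norm_num) hs]; nlinarith
  have hlamm_le : lamm ≤ lamp := by
    show (-s - d) / 2 ≤ (-s + d) / 2
    linarith
  have hlamm_half : lamm ≤ -(s / 2) := by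
    show (-s - d) / 2 ≤ -(s / 2); linarith
  have hlampabs : -lamp ≤ 2 * ξ₁ ^ 2 / s := by
    show -((-s + d) / 2) ≤ 2 * ξ₁ ^ 2 / s
    have e : -((-s + d) / 2) = (s - d) / 2 := by ring
    rw [e, div_le_div_iff₀ (by norm_num) hs]; nlinarith
  have hlampnp : lamp ≤ 0 := by
    have h0 : -ξ₁ ^ 2 / s ≤ 0 := by
      rw [neg_div]; exact neg_nonpos.mpr (div_nonneg (sq_nonneg ξ₁) hs.le)
    linarith
  have hlammneg : lamm < 0 := lt_of_le_of_lt hlamm_half (by linarith)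
  set A : ℝ := Real.exp (-(ξ₁ ^ 2) * t / s) with hA
  set B : ℝ := Real.exp (-(s * t) / 2) with hB
  have hApos : 0 < A := Real.exp_pos _
  have hBpos : 0 < B := Real.exp_pos _
  have hEp : Real.exp (lamp * t) ≤ A := by
    apply Real.exp_le_exp.mpr
    rw [div_eq_mul_inv, neg_mul, neg_mul]
    calc lamp * t ≤ (-ξ₁ ^ 2 / s) * t := mul_le_mul_of_nonneg_right hlamp_le ht
      _ = -(ξ₁ ^ 2 * t * s⁻¹) := by ring
  have hEmA : Real.exp (lamm * t) ≤ A := by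
    apply le_trans _ hEp
    exact Real.exp_le_exp.mpr (mul_le_mul_of_nonneg_right hlamm_le ht)
  have hEmB : Real.exp (lamm * t) ≤ B := by
    apply Real.exp_le_exp.mpr
    calc lamm * t ≤ (-(s / 2)) * t := mul_le_mul_of_nonneg_right hlamm_half ht
      _ = -(s * t) / 2 := by ring
  have hEppos : 0 < Real.exp (lamp * t) := Real.exp_pos _
  have hEmpos : 0 < Real.exp (lamm * t) := Real.exp_pos _
  have hpm : lamp - lamm = d := by show (-s + d) / 2 - (-s - d) / 2 = d; ring
  have hmp : lamm - lamp = -d := by show (-s - d) / 2 - (-s + d) / 2 = -d; ring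
  have habs_lamp : |lamp| = -lamp := abs_of_nonpos hlampnp
  have habs_lamm : |lamm| = (s + d) / 2 := by
    rw [abs_of_neg hlammneg]; show -((-s - d) / 2) = (s + d) / 2; ring
  constructor
  · rw [hpm, abs_div, abs_of_pos hdpos, div_le_iff₀ hdpos]
    have h1 : |lamp * Real.exp (lamm * t) - lamm * Real.exp (lamp * t)| ≤
        |lamp| * Real.exp (lamm * t) + |lamm| * Real.exp (lamp * t) := by
      calc _ ≤ |lamp * Real.exp (lamm * t)| + |lamm * Real.exp (lamp * t)| := abs_sub _ _
        _ = _ := by rw [abs_mul, abs_mul, abs_of_pos hEmpos, abs_of_pos hEppos]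
    have h2 : |lamp| * Real.exp (lamm * t) ≤ |lamp| * A :=
      mul_le_mul_of_nonneg_left hEmA (abs_nonneg _)
    have h3 : |lamm| * Real.exp (lamp * t) ≤ |lamm| * A :=
      mul_le_mul_of_nonneg_left hEp (abs_nonneg _)
    have hsum : |lamp| * A + |lamm| * A = s * A := by
      rw [← add_mul, habs_lamp, habs_lamm]
      have : -lamp + (s + d) / 2 = s := by show -((-s + d) / 2) + (s + d) / 2 = s; ring
      rw [this]
    have h6 : s * A ≤ 4 * d * A :=
      mul_le_mul_of_nonneg_right (by linarith) hApos.le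
    have h7 : 4 * d * A = 4 * A * d := by ring
    linarith
  · rw [hmp, abs_div, abs_neg, abs_of_pos hdpos, div_le_iff₀ hdpos]
    have h1 : |lamm * Real.exp (lamm * t) - lamp * Real.exp (lamp * t)| ≤
        |lamm| * Real.exp (lamm * t) + |lamp| * Real.exp (lamp * t) := by
      calc _ ≤ |lamm * Real.exp (lamm * t)| + |lamp * Real.exp (lamp * t)| := abs_sub _ _
        _ = _ := by rw [abs_mul, abs_mul, abs_of_pos hEmpos, abs_of_pos hEppos]
    have h2 : |lamm| * Real.exp (lamm * t) ≤ s * B := by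
      calc |lamm| * Real.exp (lamm * t) ≤ |lamm| * B :=
            mul_le_mul_of_nonneg_left hEmB (abs_nonneg _)
        _ ≤ s * B := by
            apply mul_le_mul_of_nonneg_right _ hBpos.le
            rw [habs_lamm]; linarith
    have h3 : |lamp| * Real.exp (lamp * t) ≤ (2 * ξ₁ ^ 2 / s) * A := by
      calc |lamp| * Real.exp (lamp * t) ≤ |lamp| * A :=
            mul_le_mul_of_nonneg_left hEp (abs_nonneg _)
        _ ≤ (2 * ξ₁ ^ 2 / s) * A := by
            apply mul_le_mul_of_nonneg_right _ hApos.le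
            rw [habs_lamp]; exact hlampabs
    -- goal: |num| ≤ 4 * (B + (ξ₁^2/s^2) * A) * d
    have key : s * B + (2 * ξ₁ ^ 2 / s) * A ≤ 4 * (B + (ξ₁ ^ 2 / s ^ 2) * A) * d := by
      have e1 : s * B ≤ 4 * B * d := by
        have h0 := mul_le_mul_of_nonneg_right (show s ≤ 4 * d by linarith) hBpos.le
        have h1' : 4 * d * B = 4 * B * d := by ring
        linarith
      have e2 : (2 * ξ₁ ^ 2 / s) * A ≤ 4 * (ξ₁ ^ 2 / s ^ 2) * A * d := by
        have h0 : 0 ≤ 4 * (ξ₁ ^ 2 / s ^ 2) * A := by positivity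
        have h1' := mul_le_mul_of_nonneg_left hdge h0
        have h2' : (2 * ξ₁ ^ 2 / s) * A = 4 * (ξ₁ ^ 2 / s ^ 2) * A * (s / 2) := by
          field_simp; ring
        linarith
      have e3 : 4 * B * d + 4 * (ξ₁ ^ 2 / s ^ 2) * A * d = 4 * (B + (ξ₁ ^ 2 / s ^ 2) * A) * d := by
        ring
      linarith
    linarith

theorem stmt3 :
    ∃ C > 0, ∀ ξ₁ ξ₂ t : ℝ, 0 ≤ t →
      |ξ₁| < (ξ₁ ^ 2 + ξ₂ ^ 2) / 4 →
      (let s : ℝ := ξ₁ ^ 2 + ξ₂ ^ 2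
       let lamp : ℝ := (-s + Real.sqrt (s ^ 2 - 4 * ξ₁ ^ 2)) / 2
       let lamm : ℝ := (-s - Real.sqrt (s ^ 2 - 4 * ξ₁ ^ 2)) / 2
       |(lamp * Real.exp (lamm * t) - lamm * Real.exp (lamp * t)) / (lamp - lamm)|
          ≤ C * Real.exp (-(ξ₁ ^ 2) * t / s) ∧
       |(lamm * Real.exp (lamm * t) - lamp * Real.exp (lamp * t)) / (lamm - lamp)|
          ≤ C * (Real.exp (-(s * t) / 2) +
              (ξ₁ ^ 2 / s ^ 2) * Real.exp (-(ξ₁ ^ 2) * t / s))) := by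
  refine ⟨4, by norm_num, fun ξ₁ ξ₂ t ht h => ?_⟩
  have hs : 0 < ξ₁ ^ 2 + ξ₂ ^ 2 := by nlinarith [abs_nonneg ξ₁]
  have hx : ξ₁ ^ 2 < (ξ₁ ^ 2 + ξ₂ ^ 2) ^ 2 / 16 := by
    nlinarith [abs_nonneg ξ₁, sq_abs ξ₁]
  exact aux3 ξ₁ (ξ₁ ^ 2 + ξ₂ ^ 2) t ht hs hx
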